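/- arXiv:2011.02328 — 2 statements merged into one kernel-verified Lean document; each statement's English description precedes it below -/
import Mathlib

section
/- Let K be a uniformly ergodic Markov kernel on (X,𝒳) with stationary distribution π. There exists a constant C₂ > 0, independent of the initial distribution of the chain, such that for any Markov chain (X_p)_{p≥1} with kernel K (arbitrary initial distribution), any P ≥ 1 and any bounded measurable φ : X → ℝ, Var((1/P) Σ_{p=1}^P φ(X_p)) ≤ C₂ ‖φ‖_∞² / P. -/
open MeasureTheory

/-- Total variation distance: `sup_{A measurable} |μ(A) − ν(A)|`. -/
noncomputable def tvDist {X : Type} [MeasurableSpace X] (μ ν : Measure X) : ℝ :=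
  ⨆ s : {s : Set X // MeasurableSet s}, |(μ s).toReal - (ν s).toReal|

/-- `k`-fold iterate of a Markov kernel `K` (as a map `X → Measure X`), started at `x`. -/
noncomputable def kpow {X : Type} [MeasurableSpace X] (K : X → Measure X) : ℕ → X → Measure X
  | 0 => fun x => Measure.dirac x
  | k + 1 => fun x => (kpow K k x).bind K

open ProbabilityTheory

section Aux

lemma abs_le_tvDist {X : Type} [MeasurableSpace X] (μ ν : Measure X)
    [IsProbabilityMeasure μ] [IsProbabilityMeasure ν] {s : Set X} (hs : MeasurableSet s) :
    |(μ s).toReal - (ν s).toReal| ≤ tvDist μ ν := by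
  have hbdd : BddAbove (Set.range fun s : {s : Set X // MeasurableSet s} =>
      |(μ s).toReal - (ν s).toReal|) := by
    refine ⟨1, ?_⟩
    rintro x ⟨t, rfl⟩
    have h1 : (μ t.1).toReal ≤ 1 := by
      have := prob_le_one (μ := μ) (s := t.1)
      simpa using ENNReal.toReal_le_of_le_ofReal zero_le_one (by simpa)
    have h2 : (ν t.1).toReal ≤ 1 := by
      have := prob_le_one (μ := ν) (s := t.1)
      simpa using ENNReal.toReal_le_of_le_ofReal zero_le_one (by simpa)
    have h3 : 0 ≤ (μ t.1).toReal := ENNReal.toReal_nonneg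
    have h4 : 0 ≤ (ν t.1).toReal := ENNReal.toReal_nonneg
    rw [abs_le]; constructor <;> linarith
  exact le_ciSup hbdd ⟨s, hs⟩

lemma integrable_of_bound {X : Type} [MeasurableSpace X] (μ : Measure X) [IsFiniteMeasure μ]
    {g : X → ℝ} (hg : Measurable g) {c : ℝ} (hb : ∀ x, |g x| ≤ c) : Integrable g μ :=
  memLp_one_iff_integrable.mp
    (MemLp.of_bound hg.aestronglyMeasurable c (ae_of_all _ (by simpa [Real.norm_eq_abs] using hb)))

lemma abs_integral_sub_integral_le {X : Type} [MeasurableSpace X] (μ ν : Measure X)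
    [IsProbabilityMeasure μ] [IsProbabilityMeasure ν] {g : X → ℝ} (hg : Measurable g)
    (hb : ∀ x, |g x| ≤ 1) :
    |∫ x, g x ∂μ - ∫ x, g x ∂ν| ≤ 2 * tvDist μ ν := by
  obtain ⟨s, hs, h1, h2⟩ := hahn_decomposition (μ := μ) (ν := ν)
  have hle1 : ν.restrict s ≤ μ.restrict s := by
    rw [Measure.le_iff]
    intro t ht
    rw [Measure.restrict_apply ht, Measure.restrict_apply ht]
    exact h1 _ (ht.inter hs) Set.inter_subset_right
  have hle2 : μ.restrict sᶜ ≤ ν.restrict sᶜ := by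
    rw [Measure.le_iff]
    intro t ht
    rw [Measure.restrict_apply ht, Measure.restrict_apply ht]
    exact h2 _ (ht.inter hs.compl) Set.inter_subset_right
  set d := μ.restrict s - ν.restrict s with hd
  set e := ν.restrict sᶜ - μ.restrict sᶜ with he
  have hdfin : IsFiniteMeasure d :=
    isFiniteMeasure_of_le μ (Measure.sub_le.trans Measure.restrict_le_self)
  have hefin : IsFiniteMeasure e :=
    isFiniteMeasure_of_le ν (Measure.sub_le.trans Measure.restrict_le_self)
  have hds : d + ν.restrict s = μ.restrict s := Measure.sub_add_cancel_of_le hle1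
  have hes : e + μ.restrict sᶜ = ν.restrict sᶜ := Measure.sub_add_cancel_of_le hle2
  have hint : ∀ (m : Measure X) [IsFiniteMeasure m], Integrable g m := fun m _ =>
    integrable_of_bound m hg hb
  have hsplitμ : ∫ x, g x ∂μ
      = ∫ x, g x ∂d + ∫ x, g x ∂(ν.restrict s) + ∫ x, g x ∂(μ.restrict sᶜ) := by
    rw [← integral_add_compl hs (hint μ), ← hds, integral_add_measure (hint d) (hint _)]
  have hsplitν : ∫ x, g x ∂ν
      = ∫ x, g x ∂(ν.restrict s) + (∫ x, g x ∂e + ∫ x, g x ∂(μ.restrict sᶜ)) := by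
    rw [← integral_add_compl hs (hint ν), ← hes, integral_add_measure (hint e) (hint _)]
  have hkey : ∫ x, g x ∂μ - ∫ x, g x ∂ν = ∫ x, g x ∂d - ∫ x, g x ∂e := by
    rw [hsplitμ, hsplitν]; ring
  have hdb : |∫ x, g x ∂d| ≤ tvDist μ ν := by
    have h := norm_integral_le_of_norm_le_const (μ := d) (f := g) (C := 1)
      (ae_of_all _ (by simpa [Real.norm_eq_abs] using hb))
    rw [Real.norm_eq_abs] at h
    have hdu : (d Set.univ).toReal = (μ s).toReal - (ν s).toReal := by
      rw [hd, Measure.sub_apply MeasurableSet.univ hle1, Measure.restrict_apply MeasurableSet.univ,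
        Measure.restrict_apply MeasurableSet.univ, Set.univ_inter,
        ENNReal.toReal_sub_of_le (h1 s hs subset_rfl) (measure_ne_top _ _)]
    have := abs_le_tvDist μ ν hs
    have h5 : (μ s).toReal - (ν s).toReal ≤ |(μ s).toReal - (ν s).toReal| := le_abs_self _
    calc |∫ x, g x ∂d| ≤ 1 * (d Set.univ).toReal := h
      _ = (μ s).toReal - (ν s).toReal := by rw [one_mul, hdu]
      _ ≤ tvDist μ ν := by linarith
  have heb : |∫ x, g x ∂e| ≤ tvDist μ ν := by
    have h := norm_integral_le_of_norm_le_const (μ := e) (f := g) (C := 1)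
      (ae_of_all _ (by simpa [Real.norm_eq_abs] using hb))
    rw [Real.norm_eq_abs] at h
    have hdu : (e Set.univ).toReal = (ν sᶜ).toReal - (μ sᶜ).toReal := by
      rw [he, Measure.sub_apply MeasurableSet.univ hle2, Measure.restrict_apply MeasurableSet.univ,
        Measure.restrict_apply MeasurableSet.univ, Set.univ_inter,
        ENNReal.toReal_sub_of_le (h2 sᶜ hs.compl subset_rfl) (measure_ne_top _ _)]
    have := abs_le_tvDist ν μ hs.compl
    have h5 : (ν sᶜ).toReal - (μ sᶜ).toReal ≤ |(ν sᶜ).toReal - (μ sᶜ).toReal| := le_abs_self _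
    have htv : tvDist ν μ = tvDist μ ν := by
      unfold tvDist
      congr 1; funext t; rw [abs_sub_comm]
    calc |∫ x, g x ∂e| ≤ 1 * (e Set.univ).toReal := h
      _ = (ν sᶜ).toReal - (μ sᶜ).toReal := by rw [one_mul, hdu]
      _ ≤ tvDist ν μ := by linarith
      _ = tvDist μ ν := htv
  calc |∫ x, g x ∂μ - ∫ x, g x ∂ν| = |∫ x, g x ∂d - ∫ x, g x ∂e| := by rw [hkey]
    _ ≤ |∫ x, g x ∂d| + |∫ x, g x ∂e| := abs_sub _ _
    _ ≤ 2 * tvDist μ ν := by linarith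

variable {X : Type} [MeasurableSpace X] {K : X → Measure X}

lemma kpow_meas (hK : Measurable K) (k : ℕ) : Measurable (kpow K k) := by
  induction k with
  | zero => exact Measure.measurable_dirac
  | succ k ih => exact (Measure.measurable_bind' hK).comp ih

lemma kpow_prob (hK : Measurable K) (hKp : ∀ x, IsProbabilityMeasure (K x)) (k : ℕ) (x : X) :
    IsProbabilityMeasure (kpow K k x) := by
  induction k with
  | zero => exact Measure.dirac.isProbabilityMeasure
  | succ k ih =>
    constructor
    rw [kpow, Measure.bind_apply MeasurableSet.univ hK.aemeasurable]
    simp only [measure_univ]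
    simpa using (lintegral_const 1 : ∫⁻ _, (1:ENNReal) ∂(kpow K k x) = _)

lemma measurable_integral_kpow (hK : Measurable K) (hKp : ∀ x, IsProbabilityMeasure (K x))
    {g : X → ℝ} (hg : Measurable g) {c : ℝ} (hb : ∀ x, |g x| ≤ c) (k : ℕ) :
    Measurable (fun x => ∫ y, g y ∂(kpow K k x)) := by
  have hG : Measurable (fun m : Measure X =>
      (∫⁻ y, ENNReal.ofReal (g y) ∂m).toReal - (∫⁻ y, ENNReal.ofReal (-(g y)) ∂m).toReal) := by
    apply Measurable.sub
    · exact (Measure.measurable_lintegral (hg.ennreal_ofReal)).ennreal_toReal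
    · exact (Measure.measurable_lintegral (hg.neg.ennreal_ofReal)).ennreal_toReal
  have heq : (fun x => ∫ y, g y ∂(kpow K k x)) = fun x =>
      (∫⁻ y, ENNReal.ofReal (g y) ∂(kpow K k x)).toReal
        - (∫⁻ y, ENNReal.ofReal (-(g y)) ∂(kpow K k x)).toReal := by
    funext x
    have : IsProbabilityMeasure (kpow K k x) := kpow_prob hK hKp k x
    exact integral_eq_lintegral_pos_part_sub_lintegral_neg_part
      (integrable_of_bound _ hg hb)
  rw [heq]
  exact hG.comp (kpow_meas hK k)

lemma geom_dist_sum {ρ : ℝ} (hρ0 : 0 ≤ ρ) (hρ1 : ρ < 1) (P p : ℕ) (hp1 : 1 ≤ p) (hpP : p ≤ P) :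
    ∑ q ∈ Finset.Icc 1 P, ρ ^ (Nat.dist p q) ≤ 2 / (1 - ρ) := by
  have hP1 : 1 ≤ P := le_trans hp1 hpP
  have hgeo : ∀ s : Finset ℕ, s ⊆ Finset.range P → ∑ j ∈ s, ρ ^ j ≤ 1 / (1 - ρ) := by
    intro s hs
    calc ∑ j ∈ s, ρ ^ j ≤ ∑ j ∈ Finset.range P, ρ ^ j :=
          Finset.sum_le_sum_of_subset_of_nonneg hs (fun i _ _ => pow_nonneg hρ0 i)
      _ ≤ ∑' j : ℕ, ρ ^ j :=
          Summable.sum_le_tsum _ (fun i _ => pow_nonneg hρ0 i) (summable_geometric_of_lt_one hρ0 hρ1)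
      _ = (1 - ρ)⁻¹ := tsum_geometric_of_lt_one hρ0 hρ1
      _ = 1 / (1 - ρ) := (one_div _).symm
  rw [← Finset.sum_filter_add_sum_filter_not (Finset.Icc 1 P) (· ≤ p)]
  have h1 : ∑ q ∈ (Finset.Icc 1 P).filter (· ≤ p), ρ ^ (Nat.dist p q) ≤ 1 / (1 - ρ) := by
    have himg : ∑ q ∈ (Finset.Icc 1 P).filter (· ≤ p), ρ ^ (Nat.dist p q)
        = ∑ j ∈ ((Finset.Icc 1 P).filter (· ≤ p)).image (fun q => p - q), ρ ^ j := by
      rw [Finset.sum_image]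
      · apply Finset.sum_congr rfl
        intro q hq
        simp only [Finset.mem_filter, Finset.mem_Icc] at hq
        congr 1
        have := hq.2
        simp [Nat.dist]; omega
      · intro q₁ hq₁ q₂ hq₂ h
        simp only [Finset.coe_filter, Finset.mem_coe, Set.mem_setOf_eq, Finset.mem_filter, Finset.mem_Icc] at hq₁ hq₂ h
        omega
    rw [himg]
    apply hgeo
    intro j hj
    simp only [Finset.mem_image, Finset.mem_filter, Finset.mem_Icc] at hj
    obtain ⟨q, ⟨⟨hq1, _⟩, hqp⟩, rfl⟩ := hj
    simp only [Finset.mem_range]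
    omega
  have h2 : ∑ q ∈ (Finset.Icc 1 P).filter (fun q => ¬ (q ≤ p)), ρ ^ (Nat.dist p q)
      ≤ 1 / (1 - ρ) := by
    have himg : ∑ q ∈ (Finset.Icc 1 P).filter (fun q => ¬ (q ≤ p)), ρ ^ (Nat.dist p q)
        = ∑ j ∈ ((Finset.Icc 1 P).filter (fun q => ¬ (q ≤ p))).image (fun q => q - p), ρ ^ j := by
      rw [Finset.sum_image]
      · apply Finset.sum_congr rfl
        intro q hq
        simp only [Finset.mem_filter, Finset.mem_Icc] at hq
        congr 1
        simp [Nat.dist]; omega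
      · intro q₁ hq₁ q₂ hq₂ h
        simp only [Finset.coe_filter, Finset.mem_coe, Set.mem_setOf_eq, Finset.mem_filter, Finset.mem_Icc] at hq₁ hq₂ h
        omega
    rw [himg]
    apply hgeo
    intro j hj
    simp only [Finset.mem_image, Finset.mem_filter, Finset.mem_Icc] at hj
    obtain ⟨q, ⟨⟨_, hqP⟩, hqp⟩, rfl⟩ := hj
    simp only [Finset.mem_range]
    omega
  calc _ ≤ 1 / (1-ρ) + 1 / (1-ρ) := add_le_add h1 h2
    _ = 2 / (1 - ρ) := by ring

end Aux

/-- For a uniformly ergodic kernel `K` with stationary distribution `π`, there is a constant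
`C₂ > 0`, independent of the initial distribution, such that for any Markov chain `(Y_p)_{p≥1}`
with kernel `K`, any `P ≥ 1` and any bounded measurable `φ`,
`Var((1/P) ∑_{p=1}^P φ(Y_p)) ≤ C₂ ‖φ‖_∞² / P`. -/
theorem variance_average_le_of_unif_ergodic {X : Type} [MeasurableSpace X]
    (K : X → Measure X) (hKmeas : Measurable K) (hKprob : ∀ x, IsProbabilityMeasure (K x))
    (π : Measure X) [IsProbabilityMeasure π] (hinv : π.bind K = π)
    (C ρ : ℝ) (hC : 0 ≤ C) (hρ0 : 0 ≤ ρ) (hρ1 : ρ < 1)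
    (herg : ∀ (x : X) (k : ℕ), 1 ≤ k → tvDist (kpow K k x) π ≤ C * ρ ^ k) :
    ∃ C₂ : ℝ, 0 < C₂ ∧
      ∀ (Ω : Type) (_ : MeasurableSpace Ω) (μ : Measure Ω), IsProbabilityMeasure μ →
      ∀ (Y : ℕ → Ω → X), (∀ p, Measurable (Y p)) →
      -- Markov property for the two-dimensional marginals of the chain, with kernel `K`
      (∀ (p k : ℕ) (f g : X → ℝ), Measurable f → Measurable g →
        (∀ x, |f x| ≤ 1) → (∀ x, |g x| ≤ 1) →
        ∫ ω, f (Y p ω) * g (Y (p + k) ω) ∂μ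
          = ∫ ω, f (Y p ω) * ∫ y, g y ∂(kpow K k (Y p ω)) ∂μ) →
      ∀ (P : ℕ), 1 ≤ P → ∀ (φ : X → ℝ) (B : ℝ), Measurable φ → (∀ x, |φ x| ≤ B) →
        variance (fun ω => (1 / (P : ℝ)) * ∑ p ∈ Finset.Icc 1 P, φ (Y p ω)) μ
          ≤ C₂ * B ^ 2 / P := by
  classical
  have hD1 : (1:ℝ) ≤ max C 1 := le_max_right _ _
  set D := max C 1 with hDdef
  have hD0 : (0:ℝ) < D := lt_of_lt_of_le one_pos hD1
  have hρ' : (0:ℝ) < 1 - ρ := by linarith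
  refine ⟨8 * D / (1 - ρ), by positivity, ?_⟩
  intro Ω mΩ μ hμprob Y hY hMarkov P hP φ B hφm hφb
  haveI := hμprob
  have hΩ : Nonempty Ω := by
    by_contra h
    rw [not_nonempty_iff] at h
    have h1 := hμprob.measure_univ
    rw [Set.univ_eq_empty_iff.mpr h, measure_empty] at h1
    exact zero_ne_one h1
  have hB0 : 0 ≤ B := le_trans (abs_nonneg _) (hφb (Y 1 hΩ.some))
  have hP0 : (0:ℝ) < (P:ℝ) := by exact_mod_cast hP
  rcases eq_or_lt_of_le hB0 with hB | hB
  · -- degenerate case B = 0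
    have hφ0 : ∀ x, φ x = 0 := fun x => abs_nonpos_iff.mp (le_trans (hφb x) hB.ge)
    have hTz : (fun ω => (1 / (P:ℝ)) * ∑ p ∈ Finset.Icc 1 P, φ (Y p ω)) = fun _ => (0:ℝ) := by
      funext ω; simp [hφ0]
    rw [hTz, ← hB]
    have hz : (fun _ : Ω => (0:ℝ)) = (0 : Ω → ℝ) := rfl
    rw [hz, variance_zero]
    positivity
  · -- main case B > 0
    set ψ : X → ℝ := fun x => φ x / B with hψdef
    have hψm : Measurable ψ := hφm.div_const B
    have hψb : ∀ x, |ψ x| ≤ 1 := by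
      intro x
      rw [hψdef]
      simp only
      rw [abs_div, abs_of_pos hB]
      exact (div_le_one hB).mpr (hφb x)
    have hφψ : ∀ x, φ x = B * ψ x := by
      intro x; rw [hψdef]; field_simp
    -- iterated-kernel averages
    set F : ℕ → X → ℝ := fun k x => ∫ y, ψ y ∂(kpow K k x) with hFdef
    have hFm : ∀ k, Measurable (F k) := fun k =>
      measurable_integral_kpow hKmeas hKprob hψm hψb k
    have hFb : ∀ k x, |F k x| ≤ 1 := by
      intro k x
      haveI := kpow_prob hKmeas hKprob k x
      have h := norm_integral_le_of_norm_le_const (μ := kpow K k x) (f := ψ) (C := 1)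
        (ae_of_all _ (by simpa [Real.norm_eq_abs] using hψb))
      rw [hFdef]
      simpa [Real.norm_eq_abs, measure_univ] using h
    set a : ℝ := ∫ y, ψ y ∂π with hadef
    have hFa : ∀ k, 1 ≤ k → ∀ x, |F k x - a| ≤ 2 * (C * ρ ^ k) := by
      intro k hk x
      haveI := kpow_prob hKmeas hKprob k x
      have h := abs_integral_sub_integral_le (kpow K k x) π hψm hψb
      have h2 := herg x k hk
      have : |F k x - a| ≤ 2 * tvDist (kpow K k x) π := by
        rw [hFdef, hadef]; exact h
      linarith
    have hcρ : ∀ k : ℕ, 0 ≤ C * ρ ^ k := fun k => mul_nonneg hC (pow_nonneg hρ0 k)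
    -- the centered variables
    set Z : ℕ → Ω → ℝ := fun p ω => ψ (Y p ω) with hZdef
    have hZm : ∀ p, Measurable (Z p) := fun p => hψm.comp (hY p)
    have hZb : ∀ p ω, |Z p ω| ≤ 1 := fun p ω => hψb _
    have hZint : ∀ p, Integrable (Z p) μ := fun p => integrable_of_bound μ (hZm p) (hZb p)
    set m : ℕ → ℝ := fun p => ∫ ω, Z p ω ∂μ with hmdef
    have hmb : ∀ p, |m p| ≤ 1 := by
      intro p
      have h := norm_integral_le_of_norm_le_const (μ := μ) (f := Z p) (C := 1)
        (ae_of_all _ (by simpa [Real.norm_eq_abs] using hZb p))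
      rw [hmdef]
      simpa [Real.norm_eq_abs, measure_univ] using h
    set c2 : ℕ → ℕ → ℝ := fun p q => ∫ ω, (Z p ω - m p) * (Z q ω - m q) ∂μ with hc2def
    have hgg_int : ∀ p q, Integrable (fun ω => (Z p ω - m p) * (Z q ω - m q)) μ := by
      intro p q
      refine integrable_of_bound μ (((hZm p).sub measurable_const).mul
        ((hZm q).sub measurable_const)) (c := 4) ?_
      intro ω
      rw [abs_mul]
      have h1 : |Z p ω - m p| ≤ 2 := (abs_sub _ _).trans (by linarith [hZb p ω, hmb p])
      have h2 : |Z q ω - m q| ≤ 2 := (abs_sub _ _).trans (by linarith [hZb q ω, hmb q])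
      nlinarith [abs_nonneg (Z p ω - m p), abs_nonneg (Z q ω - m q)]
    have hcsymm : ∀ p q, c2 p q = c2 q p := by
      intro p q
      rw [hc2def]
      simp only
      congr 1
      funext ω
      ring
    -- covariance bound for separated times
    have hcov : ∀ p k : ℕ, 1 ≤ k → |c2 p (p + k)| ≤ 4 * (C * ρ ^ k) := by
      intro p k hk
      have hum : Measurable (fun ω => F k (Y p ω)) := (hFm k).comp (hY p)
      have hub : ∀ ω, |F k (Y p ω)| ≤ 1 := fun ω => hFb k _
      have huint : Integrable (fun ω => F k (Y p ω)) μ := integrable_of_bound μ hum hub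
      have hZZint : Integrable (fun ω => Z p ω * Z (p + k) ω) μ := by
        refine integrable_of_bound μ ((hZm p).mul (hZm (p + k))) (c := 1) ?_
        intro ω
        rw [abs_mul]
        exact mul_le_one₀ (hZb p ω) (abs_nonneg _) (hZb (p + k) ω)
      have hZuaint : Integrable (fun ω => Z p ω * (F k (Y p ω) - a)) μ := by
        refine integrable_of_bound μ ((hZm p).mul (hum.sub measurable_const)) (c := 3) ?_
        intro ω
        rw [abs_mul]
        have h1 : |F k (Y p ω) - a| ≤ 2 := by
          refine (abs_sub _ _).trans ?_
          have ha1 : |a| ≤ 1 := by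
            have h := norm_integral_le_of_norm_le_const (μ := π) (f := ψ) (C := 1)
              (ae_of_all _ (by simpa [Real.norm_eq_abs] using hψb))
            rw [hadef]
            simpa [Real.norm_eq_abs, measure_univ] using h
          linarith [hFb k (Y p ω)]
        nlinarith [abs_nonneg (Z p ω), hZb p ω, abs_nonneg (F k (Y p ω) - a)]
      have hZZ : ∫ ω, Z p ω * Z (p + k) ω ∂μ = ∫ ω, Z p ω * F k (Y p ω) ∂μ := by
        exact hMarkov p k ψ ψ hψm hψm hψb hψb
      have hmq : m (p + k) = ∫ ω, F k (Y p ω) ∂μ := by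
        have h := hMarkov p k (fun _ => 1) ψ measurable_const hψm (fun x => by norm_num) hψb
        simp only [one_mul] at h
        exact h
      have hexp : c2 p (p + k) = (∫ ω, Z p ω * Z (p + k) ω ∂μ) - m p * m (p + k) := by
        rw [hc2def]
        simp only
        have e1 : ∀ ω, (Z p ω - m p) * (Z (p + k) ω - m (p + k))
            = Z p ω * Z (p + k) ω - m (p + k) * Z p ω - m p * Z (p + k) ω
              + m p * m (p + k) := fun ω => by ring
        have hiD : Integrable (fun ω => m (p + k) * Z p ω) μ := (hZint p).const_mul _
        have hiC : Integrable (fun ω => m p * Z (p + k) ω) μ := (hZint (p + k)).const_mul _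
        have hiB : Integrable (fun ω => Z p ω * Z (p + k) ω - m (p + k) * Z p ω) μ :=
          hZZint.sub hiD
        have hiA : Integrable
            (fun ω => Z p ω * Z (p + k) ω - m (p + k) * Z p ω - m p * Z (p + k) ω) μ :=
          hiB.sub hiC
        rw [integral_congr_ae (ae_of_all _ e1)]
        rw [integral_add hiA (integrable_const _), integral_sub hiB hiC,
          integral_sub hZZint hiD, integral_const_mul, integral_const_mul, integral_const]
        simp only [measure_univ, probReal_univ, ENNReal.toReal_one, smul_eq_mul, one_mul, mul_one]
        have e3 : ∫ ω, Z p ω ∂μ = m p := rfl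
        have e4 : ∫ ω, Z (p + k) ω ∂μ = m (p + k) := rfl
        rw [e3, e4]
        ring
      have hsub1 : ∫ ω, Z p ω * F k (Y p ω) ∂μ
          = (∫ ω, Z p ω * (F k (Y p ω) - a) ∂μ) + a * m p := by
        have e2 : ∀ ω, Z p ω * F k (Y p ω) = Z p ω * (F k (Y p ω) - a) + a * Z p ω :=
          fun ω => by ring
        have hiE : Integrable (fun ω => a * Z p ω) μ := (hZint p).const_mul a
        rw [integral_congr_ae (ae_of_all _ e2), integral_add hZuaint hiE, integral_const_mul]
      have hsub2 : ∫ ω, F k (Y p ω) ∂μ = (∫ ω, (F k (Y p ω) - a) ∂μ) + a := by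
        rw [integral_sub huint (integrable_const a), integral_const]
        simp [measure_univ]
      have hbound1 : |∫ ω, Z p ω * (F k (Y p ω) - a) ∂μ| ≤ 2 * (C * ρ ^ k) := by
        have h := norm_integral_le_of_norm_le_const (μ := μ)
          (f := fun ω => Z p ω * (F k (Y p ω) - a)) (C := 2 * (C * ρ ^ k)) ?_
        · rw [Real.norm_eq_abs] at h
          simpa [measure_univ] using h
        · refine ae_of_all _ (fun ω => ?_)
          rw [Real.norm_eq_abs, abs_mul]
          calc |Z p ω| * |F k (Y p ω) - a| ≤ 1 * (2 * (C * ρ ^ k)) :=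
                mul_le_mul (hZb p ω) (hFa k hk _) (abs_nonneg _) zero_le_one
            _ = 2 * (C * ρ ^ k) := one_mul _
      have hbound2 : |∫ ω, (F k (Y p ω) - a) ∂μ| ≤ 2 * (C * ρ ^ k) := by
        have h := norm_integral_le_of_norm_le_const (μ := μ)
          (f := fun ω => F k (Y p ω) - a) (C := 2 * (C * ρ ^ k))
          (ae_of_all _ (fun ω => by rw [Real.norm_eq_abs]; exact hFa k hk _))
        rw [Real.norm_eq_abs] at h
        simpa [measure_univ] using h
      have hfinal : c2 p (p + k)
          = (∫ ω, Z p ω * (F k (Y p ω) - a) ∂μ) - m p * (∫ ω, (F k (Y p ω) - a) ∂μ) := by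
        rw [hexp, hZZ, hsub1, hmq, hsub2]
        ring
      rw [hfinal]
      have h3 : |m p * (∫ ω, (F k (Y p ω) - a) ∂μ)| ≤ 1 * (2 * (C * ρ ^ k)) := by
        rw [abs_mul]
        exact mul_le_mul (hmb p) hbound2 (abs_nonneg _) zero_le_one
      calc |(∫ ω, Z p ω * (F k (Y p ω) - a) ∂μ) - m p * (∫ ω, (F k (Y p ω) - a) ∂μ)|
          ≤ |∫ ω, Z p ω * (F k (Y p ω) - a) ∂μ|
            + |m p * (∫ ω, (F k (Y p ω) - a) ∂μ)| := abs_sub _ _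
        _ ≤ 4 * (C * ρ ^ k) := by linarith
    -- diagonal bound
    have hdiag : ∀ p, |c2 p p| ≤ 4 := by
      intro p
      rw [hc2def]
      simp only
      have h := norm_integral_le_of_norm_le_const (μ := μ)
        (f := fun ω => (Z p ω - m p) * (Z p ω - m p)) (C := 4) ?_
      · rw [Real.norm_eq_abs] at h
        simpa [measure_univ] using h
      · refine ae_of_all _ (fun ω => ?_)
        rw [Real.norm_eq_abs, abs_mul]
        have h1 : |Z p ω - m p| ≤ 2 := (abs_sub _ _).trans (by linarith [hZb p ω, hmb p])
        nlinarith [abs_nonneg (Z p ω - m p)]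
    -- uniform covariance bound in terms of `Nat.dist`
    have hcd : ∀ p q : ℕ, |c2 p q| ≤ 4 * D * ρ ^ (Nat.dist p q) := by
      have key : ∀ p q : ℕ, p ≤ q → |c2 p q| ≤ 4 * D * ρ ^ (q - p) := by
        intro p q hpq
        rcases eq_or_lt_of_le hpq with rfl | hlt
        · simp only [Nat.sub_self, pow_zero, mul_one]
          exact (hdiag p).trans (by nlinarith)
        · have hk : 1 ≤ q - p := by omega
          have h := hcov p (q - p) hk
          rw [show p + (q - p) = q by omega] at h
          refine h.trans ?_
          have hρk : (0:ℝ) ≤ ρ ^ (q - p) := pow_nonneg hρ0 _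
          have : C * ρ ^ (q - p) ≤ D * ρ ^ (q - p) :=
            mul_le_mul_of_nonneg_right (le_max_left _ _) hρk
          linarith
      intro p q
      rcases le_total p q with h | h
      · have hd : Nat.dist p q = q - p := by simp [Nat.dist]; omega
        rw [hd]
        exact key p q h
      · have hd : Nat.dist p q = p - q := by simp [Nat.dist]; omega
        rw [hd, hcsymm]
        exact key q p h
    -- the averaged function
    set T : Ω → ℝ := fun ω => (1 / (P:ℝ)) * ∑ p ∈ Finset.Icc 1 P, φ (Y p ω) with hTdef
    have hTeq : ∀ ω, T ω = (B / (P:ℝ)) * ∑ p ∈ Finset.Icc 1 P, Z p ω := by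
      intro ω
      rw [hTdef, hZdef]
      simp only
      rw [Finset.mul_sum, Finset.mul_sum]
      refine Finset.sum_congr rfl (fun p _ => ?_)
      rw [hφψ (Y p ω)]
      ring
    have hTm : Measurable T := by
      rw [hTdef]
      exact (Finset.measurable_sum _ (fun p _ => hφm.comp (hY p))).const_mul _
    have hTb : ∀ ω, |T ω| ≤ B := by
      intro ω
      rw [hTeq]
      rw [abs_mul, abs_of_pos (by positivity : (0:ℝ) < B / (P:ℝ))]
      have h1 : |∑ p ∈ Finset.Icc 1 P, Z p ω| ≤ (P:ℝ) := by
        calc |∑ p ∈ Finset.Icc 1 P, Z p ω| ≤ ∑ p ∈ Finset.Icc 1 P, |Z p ω| :=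
              Finset.abs_sum_le_sum_abs _ _
          _ ≤ ∑ p ∈ Finset.Icc 1 P, (1:ℝ) := Finset.sum_le_sum (fun p _ => hZb p ω)
          _ = (P:ℝ) := by
              rw [Finset.sum_const, Nat.card_Icc]
              simp
      calc B / (P:ℝ) * |∑ p ∈ Finset.Icc 1 P, Z p ω| ≤ B / (P:ℝ) * (P:ℝ) :=
            mul_le_mul_of_nonneg_left h1 (by positivity)
        _ = B := by field_simp
    have hTmem : MemLp T 2 μ :=
      MemLp.of_bound hTm.aestronglyMeasurable B
        (ae_of_all _ (by simpa [Real.norm_eq_abs] using hTb))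
    have hgoal : variance T μ ≤ 8 * D / (1 - ρ) * B ^ 2 / (P:ℝ) := by
      rw [variance_eq_integral hTmem.aemeasurable]
      have hET : ∫ ω, T ω ∂μ = (B / (P:ℝ)) * ∑ p ∈ Finset.Icc 1 P, m p := by
        rw [integral_congr_ae (ae_of_all _ hTeq), integral_const_mul,
          integral_finset_sum _ (fun p _ => hZint p)]
      have hsq : ∀ ω, ((T - fun _ => ∫ ω', T ω' ∂μ : Ω → ℝ) ^ 2) ω
          = (B / (P:ℝ))^2 * ∑ p ∈ Finset.Icc 1 P, ∑ q ∈ Finset.Icc 1 P,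
              (Z p ω - m p) * (Z q ω - m q) := by
        intro ω
        rw [Pi.pow_apply, Pi.sub_apply, hTeq, hET, ← mul_sub, ← Finset.sum_sub_distrib,
          mul_pow, pow_two (∑ p ∈ Finset.Icc 1 P, (Z p ω - m p)), Finset.sum_mul_sum]
      have hVar : ∫ ω, ((T - fun _ => ∫ ω', T ω' ∂μ : Ω → ℝ) ^ 2) ω ∂μ
          = (B / (P:ℝ))^2 * ∑ p ∈ Finset.Icc 1 P, ∑ q ∈ Finset.Icc 1 P, c2 p q := by
        rw [integral_congr_ae (ae_of_all _ hsq), integral_const_mul,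
          integral_finset_sum _ (fun p _ =>
            integrable_finset_sum _ (fun q _ => hgg_int p q))]
        congr 1
        refine Finset.sum_congr rfl (fun p _ => ?_)
        rw [integral_finset_sum _ (fun q _ => hgg_int p q)]
      have hsum : ∑ p ∈ Finset.Icc 1 P, ∑ q ∈ Finset.Icc 1 P, c2 p q
          ≤ (P:ℝ) * (4 * D * (2 / (1 - ρ))) := by
        calc ∑ p ∈ Finset.Icc 1 P, ∑ q ∈ Finset.Icc 1 P, c2 p q
            ≤ ∑ p ∈ Finset.Icc 1 P, ∑ q ∈ Finset.Icc 1 P, (4 * D * ρ ^ (Nat.dist p q)) := by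
              refine Finset.sum_le_sum (fun p _ => Finset.sum_le_sum (fun q _ => ?_))
              exact (le_abs_self _).trans (hcd p q)
          _ ≤ ∑ p ∈ Finset.Icc 1 P, (4 * D * (2 / (1 - ρ))) := by
              refine Finset.sum_le_sum (fun p hp => ?_)
              rw [Finset.mem_Icc] at hp
              rw [← Finset.mul_sum]
              exact mul_le_mul_of_nonneg_left (geom_dist_sum hρ0 hρ1 P p hp.1 hp.2)
                (by positivity)
          _ = (P:ℝ) * (4 * D * (2 / (1 - ρ))) := by
              rw [Finset.sum_const, Nat.card_Icc]
              simp [mul_comm]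
      calc ∫ ω, ((T - fun _ => ∫ ω', T ω' ∂μ : Ω → ℝ) ^ 2) ω ∂μ
          = (B / (P:ℝ))^2 * ∑ p ∈ Finset.Icc 1 P, ∑ q ∈ Finset.Icc 1 P, c2 p q := hVar
        _ ≤ (B / (P:ℝ))^2 * ((P:ℝ) * (4 * D * (2 / (1 - ρ)))) :=
            mul_le_mul_of_nonneg_left hsum (sq_nonneg _)
        _ = 8 * D / (1 - ρ) * B ^ 2 / (P:ℝ) := by
            field_simp
            ring
    exact hgoal
end

section
/- Let (X_n) and (Y_n) be sequences of random variables with X_n ⇒ P_X (convergence in distribution), and suppose that the conditional distribution of Y_n given σ(X_n) converges to P_Y in the sense that E[e^{ivY_n} | X_n] → E[e^{ivY}] almost surely for every v ∈ ℝ, where Y ∼ P_Y. Then the pair (X_n, Y_n) converges in distribution to the product measure P_X ⊗ P_Y. -/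
open MeasureTheory Filter Complex
open scoped Topology NNReal

section Aux

variable {Ω : Type} {m m0 : MeasurableSpace Ω} {μ : Measure Ω}

private lemma norm_char (t x : ℝ) : ‖Complex.exp (t * x * Complex.I)‖ = 1 := by
  rw [show ((t : ℂ) * (x : ℂ)) = ((t * x : ℝ) : ℂ) by push_cast; ring,
    Complex.norm_exp_ofReal_mul_I]

/-- If all `m`-set-integrals of `r` vanish, then `∫ φ * r = 0` for bounded
`m`-measurable real `φ`. -/
private lemma integral_mul_eq_zero_real (hm : m ≤ m0) [IsFiniteMeasure μ]
    {φ r : Ω → ℝ} (hφ : StronglyMeasurable[m] φ) {c : ℝ} (hφb : ∀ ω, ‖φ ω‖ ≤ c)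
    (hr : Integrable r μ)
    (hr0 : ∀ s, MeasurableSet[m] s → ∫ ω in s, r ω ∂μ = 0) :
    ∫ ω, φ ω * r ω ∂μ = 0 := by
  have h0 : (0 : Ω → ℝ) =ᵐ[μ] μ[r|m] :=
    ae_eq_condExp_of_forall_setIntegral_eq hm hr
      (fun s _ _ => (integrable_zero _ _ _).integrableOn)
      (fun s hs _ => by simp [hr0 s hs])
      stronglyMeasurable_zero.aestronglyMeasurable
  have hpull := condExp_stronglyMeasurable_mul_of_bound hm hφ hr c (Eventually.of_forall hφb)
  calc ∫ ω, φ ω * r ω ∂μ = ∫ ω, (μ[φ * r|m]) ω ∂μ := (integral_condExp hm).symm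
    _ = ∫ ω, (φ * μ[r|m]) ω ∂μ := integral_congr_ae hpull
    _ = 0 := by
        rw [show (0 : ℝ) = ∫ ω, (0 : Ω → ℝ) ω ∂μ by simp]
        refine integral_congr_ae ?_
        filter_upwards [h0] with ω hω
        simp [Pi.mul_apply, ← hω]

/-- Complex version, with a real bounded `m`-measurable factor. -/
private lemma integral_mul_eq_zero_real_complex (hm : m ≤ m0) [IsFiniteMeasure μ]
    {φ : Ω → ℝ} (hφ : StronglyMeasurable[m] φ) {c : ℝ} (hφb : ∀ ω, ‖φ ω‖ ≤ c)
    {k : Ω → ℂ} (hk : Integrable k μ)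
    (hk0 : ∀ s, MeasurableSet[m] s → ∫ ω in s, k ω ∂μ = 0) :
    ∫ ω, (φ ω : ℂ) * k ω ∂μ = 0 := by
  have hint : Integrable (fun ω => (φ ω : ℂ) * k ω) μ :=
    hk.bdd_mul ((Complex.continuous_ofReal.comp_stronglyMeasurable
      (hφ.mono hm)).aestronglyMeasurable) (Eventually.of_forall (by simpa using hφb))
  have hre : ∫ ω, φ ω * (k ω).re ∂μ = 0 := by
    refine integral_mul_eq_zero_real hm hφ hφb (by simpa using hk.re) (fun s hs => ?_)
    have := hk.integrableOn (s := s)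
    have h1 : ∫ ω in s, (k ω).re ∂μ = (∫ ω in s, k ω ∂μ).re := by
      simpa using integral_re (μ := μ.restrict s) this
    rw [h1, hk0 s hs]; simp
  have him : ∫ ω, φ ω * (k ω).im ∂μ = 0 := by
    refine integral_mul_eq_zero_real hm hφ hφb (by simpa using hk.im) (fun s hs => ?_)
    have := hk.integrableOn (s := s)
    have h1 : ∫ ω in s, (k ω).im ∂μ = (∫ ω in s, k ω ∂μ).im := by
      simpa using integral_im (μ := μ.restrict s) this
    rw [h1, hk0 s hs]; simp
  apply Complex.ext
  · have h := integral_re hint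
    simp only [RCLike.re_to_complex] at h
    rw [← h, Complex.zero_re]
    simp only [Complex.mul_re, Complex.ofReal_re, Complex.ofReal_im, zero_mul, sub_zero]
    exact hre
  · have h := integral_im hint
    simp only [RCLike.im_to_complex] at h
    rw [← h, Complex.zero_im]
    simp only [Complex.mul_im, Complex.ofReal_re, Complex.ofReal_im, zero_mul, add_zero]
    exact him

/-- Pull-out property in integral form, complex-valued. -/
private lemma integral_mul_condexp (hm : m ≤ m0) [IsProbabilityMeasure μ]
    {f g : Ω → ℂ} (hf : StronglyMeasurable[m] f) {c : ℝ} (hfb : ∀ ω, ‖f ω‖ ≤ c)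
    (hg : Integrable g μ) :
    ∫ ω, f ω * g ω ∂μ = ∫ ω, f ω * (μ[g|m]) ω ∂μ := by
  set k : Ω → ℂ := fun ω => g ω - (μ[g|m]) ω with hk_def
  have hk : Integrable k μ := hg.sub integrable_condExp
  have hk0 : ∀ s, MeasurableSet[m] s → ∫ ω in s, k ω ∂μ = 0 := by
    intro s hs
    rw [integral_sub hg.integrableOn integrable_condExp.integrableOn,
      setIntegral_condExp hm hg hs, sub_self]
  have hIk : Integrable (fun ω => Complex.I * k ω) μ := hk.const_mul _
  have hIk0 : ∀ s, MeasurableSet[m] s → ∫ ω in s, Complex.I * k ω ∂μ = 0 := by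
    intro s hs
    rw [integral_const_mul, hk0 s hs, mul_zero]
  have hre : StronglyMeasurable[m] fun ω => (f ω).re :=
    Complex.continuous_re.comp_stronglyMeasurable hf
  have him : StronglyMeasurable[m] fun ω => (f ω).im :=
    Complex.continuous_im.comp_stronglyMeasurable hf
  have hreb : ∀ ω, ‖(f ω).re‖ ≤ c := fun ω =>
    (Complex.abs_re_le_norm (f ω)).trans (hfb ω)
  have himb : ∀ ω, ‖(f ω).im‖ ≤ c := fun ω =>
    (Complex.abs_im_le_norm (f ω)).trans (hfb ω)
  have hfaem : AEStronglyMeasurable f μ := (hf.mono hm).aestronglyMeasurable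
  have key : ∫ ω, f ω * k ω ∂μ = 0 := by
    have hsplit : ∀ ω, f ω * k ω
        = ((f ω).re : ℂ) * k ω + ((f ω).im : ℂ) * (Complex.I * k ω) := by
      intro ω
      conv_lhs => rw [← Complex.re_add_im (f ω)]
      ring
    have h1 := integral_mul_eq_zero_real_complex hm hre hreb hk hk0
    have h2 := integral_mul_eq_zero_real_complex hm him himb hIk hIk0
    have i1 : Integrable (fun ω => ((f ω).re : ℂ) * k ω) μ :=
      hk.bdd_mul ((Complex.continuous_ofReal.comp_stronglyMeasurable
        (hre.mono hm)).aestronglyMeasurable) (Eventually.of_forall (by simpa using hreb))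
    have i2 : Integrable (fun ω => ((f ω).im : ℂ) * (Complex.I * k ω)) μ :=
      hIk.bdd_mul ((Complex.continuous_ofReal.comp_stronglyMeasurable
        (him.mono hm)).aestronglyMeasurable) (Eventually.of_forall (by simpa using himb))
    calc ∫ ω, f ω * k ω ∂μ
        = ∫ ω, (((f ω).re : ℂ) * k ω + ((f ω).im : ℂ) * (Complex.I * k ω)) ∂μ := by
          simp_rw [hsplit]
      _ = (∫ ω, ((f ω).re : ℂ) * k ω ∂μ) + ∫ ω, ((f ω).im : ℂ) * (Complex.I * k ω) ∂μ :=
          integral_add i1 i2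
      _ = 0 := by rw [h1, h2, add_zero]
  have ig : Integrable (fun ω => f ω * g ω) μ :=
    hg.bdd_mul hfaem (Eventually.of_forall hfb)
  have icond : Integrable (fun ω => f ω * (μ[g|m]) ω) μ :=
    integrable_condExp.bdd_mul hfaem (Eventually.of_forall hfb)
  have : ∫ ω, f ω * g ω ∂μ - ∫ ω, f ω * (μ[g|m]) ω ∂μ = 0 := by
    rw [← integral_sub ig icond]
    simpa [hk_def, mul_sub] using key
  exact sub_eq_zero.mp this

/-- Conditional expectation commutes with taking real parts. -/
private lemma condexp_re (hm : m ≤ m0) [SigmaFinite (μ.trim hm)] {g : Ω → ℂ}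
    (hg : Integrable g μ) :
    (fun ω => ((μ[g|m]) ω).re) =ᵐ[μ] μ[fun ω => (g ω).re|m] := by
  have hic : Integrable (fun ω => ((μ[g|m]) ω).re) μ := by
    simpa using (integrable_condExp (m := m) (f := g)).re
  refine ae_eq_condExp_of_forall_setIntegral_eq hm (by simpa using hg.re)
    (fun s _ _ => hic.integrableOn) (fun s hs _ => ?_)
    (Complex.continuous_re.comp_stronglyMeasurable
      stronglyMeasurable_condExp).aestronglyMeasurable
  have h1 := integral_re (μ := μ.restrict s) (integrable_condExp (m := m) (f := g)).integrableOn
  have h2 := integral_re (μ := μ.restrict s) hg.integrableOn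
  simp only [RCLike.re_to_complex] at h1 h2
  rw [h1, setIntegral_condExp hm hg hs, ← h2]

/-- Conditional expectation commutes with taking imaginary parts. -/
private lemma condexp_im (hm : m ≤ m0) [SigmaFinite (μ.trim hm)] {g : Ω → ℂ}
    (hg : Integrable g μ) :
    (fun ω => ((μ[g|m]) ω).im) =ᵐ[μ] μ[fun ω => (g ω).im|m] := by
  have hic : Integrable (fun ω => ((μ[g|m]) ω).im) μ := by
    simpa using (integrable_condExp (m := m) (f := g)).im
  refine ae_eq_condExp_of_forall_setIntegral_eq hm (by simpa using hg.im)
    (fun s _ _ => hic.integrableOn) (fun s hs _ => ?_)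
    (Complex.continuous_im.comp_stronglyMeasurable
      stronglyMeasurable_condExp).aestronglyMeasurable
  have h1 := integral_im (μ := μ.restrict s) (integrable_condExp (m := m) (f := g)).integrableOn
  have h2 := integral_im (μ := μ.restrict s) hg.integrableOn
  simp only [RCLike.im_to_complex] at h1 h2
  rw [h1, setIntegral_condExp hm hg hs, ← h2]

/-- The conditional expectation of a function bounded by 1 is bounded by 2 a.e. -/
private lemma ae_norm_condexp_le (hm : m ≤ m0) [IsProbabilityMeasure μ] {g : Ω → ℂ}
    (hg : Integrable g μ) (hgb : ∀ ω, ‖g ω‖ ≤ 1) :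
    ∀ᵐ ω ∂μ, ‖(μ[g|m]) ω‖ ≤ 2 := by
  have hre : ∀ᵐ ω ∂μ, |(μ[fun ω => (g ω).re|m]) ω| ≤ ((1 : ℝ≥0) : ℝ) := by
    refine ae_bdd_condExp_of_ae_bdd (Eventually.of_forall fun ω => ?_)
    have h := (Complex.abs_re_le_norm (g ω)).trans
      (hgb ω)
    simpa using h
  have him : ∀ᵐ ω ∂μ, |(μ[fun ω => (g ω).im|m]) ω| ≤ ((1 : ℝ≥0) : ℝ) := by
    refine ae_bdd_condExp_of_ae_bdd (Eventually.of_forall fun ω => ?_)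
    have h := (Complex.abs_im_le_norm (g ω)).trans
      (hgb ω)
    simpa using h
  filter_upwards [hre, him, condexp_re hm hg, condexp_im hm hg] with ω h1 h2 e1 e2
  have : ‖(μ[g|m]) ω‖ ≤ |((μ[g|m]) ω).re| + |((μ[g|m]) ω).im| := by
    exact Complex.norm_le_abs_re_add_abs_im _
  refine this.trans ?_
  rw [e1, e2]
  push_cast at h1 h2
  linarith

private lemma integrable_char {Ω : Type} [MeasurableSpace Ω] {μ : Measure Ω} [IsFiniteMeasure μ]
    {Z : Ω → ℝ} (hZ : Measurable Z) (t : ℝ) :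
    Integrable (fun ω => Complex.exp (t * Z ω * Complex.I)) μ := by
  have hms : Measurable fun ω => Complex.exp (t * Z ω * Complex.I) :=
    Complex.measurable_exp.comp
      (((Complex.measurable_ofReal.comp hZ).const_mul (t : ℂ)).mul_const Complex.I)
  exact (integrable_const (1 : ℝ)).mono' hms.aestronglyMeasurable
    (Eventually.of_forall fun ω => le_of_eq (norm_char t (Z ω)))

end Aux

/-- If `X_n ⇒ P_X` and `E[e^{ivY_n} | X_n] → E[e^{ivY}]` a.s. for every `v`, then
`(X_n, Y_n)` converges in distribution to the product `P_X ⊗ P_Y`, in the sense of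
joint characteristic functions. -/
theorem joint_char_tendsto_of_cond_char_tendsto
    {Ω : Type} {m0 : MeasurableSpace Ω} (μ : Measure Ω) [IsProbabilityMeasure μ]
    (X Y : ℕ → Ω → ℝ) (hX : ∀ n, Measurable (X n)) (hY : ∀ n, Measurable (Y n))
    (PX PY : Measure ℝ) [IsProbabilityMeasure PX] [IsProbabilityMeasure PY]
    (hXconv : ∀ u : ℝ,
      Tendsto (fun n => ∫ ω, Complex.exp (u * X n ω * Complex.I) ∂μ) atTop
        (𝓝 (∫ x, Complex.exp (u * x * Complex.I) ∂PX)))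
    (hYcond : ∀ v : ℝ,
      ∀ᵐ ω ∂μ, Tendsto
        (fun n =>
          (μ[(fun ω' => Complex.exp (v * Y n ω' * Complex.I)) |
            MeasurableSpace.comap (X n) (borel ℝ)]) ω)
        atTop (𝓝 (∫ y, Complex.exp (v * y * Complex.I) ∂PY))) :
    ∀ u v : ℝ,
      Tendsto (fun n => ∫ ω, Complex.exp ((u * X n ω + v * Y n ω) * Complex.I) ∂μ) atTop
        (𝓝 ((∫ x, Complex.exp (u * x * Complex.I) ∂PX)
          * (∫ y, Complex.exp (v * y * Complex.I) ∂PY))) := by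
  intro u v
  set c1 := ∫ x, Complex.exp (u * x * Complex.I) ∂PX with hc1
  set c2 := ∫ y, Complex.exp (v * y * Complex.I) ∂PY with hc2
  have hb : (borel ℝ) = (inferInstance : MeasurableSpace ℝ) :=
    (BorelSpace.measurable_eq (α := ℝ)).symm
  have hm : ∀ n, MeasurableSpace.comap (X n) (borel ℝ) ≤ m0 := by
    intro n s hs
    obtain ⟨t, ht, rfl⟩ := hs
    refine hX n ?_
    rw [hb] at ht
    exact ht
  have hXmeas : ∀ n, Measurable[MeasurableSpace.comap (X n) (borel ℝ)] (X n) := by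
    intro n
    rw [hb]
    exact comap_measurable (X n)
  have hXm : ∀ n, StronglyMeasurable[MeasurableSpace.comap (X n) (borel ℝ)]
      fun ω => Complex.exp (u * X n ω * Complex.I) := fun n =>
    (Complex.measurable_exp.comp
      (((Complex.measurable_ofReal.comp (hXmeas n)).const_mul (u : ℂ)).mul_const
        Complex.I)).stronglyMeasurable
  have hfb : ∀ n ω, ‖Complex.exp (u * X n ω * Complex.I)‖ ≤ (1 : ℝ) :=
    fun n ω => le_of_eq (norm_char u (X n ω))
  have hgint : ∀ n, Integrable (fun ω => Complex.exp (v * Y n ω * Complex.I)) μ :=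
    fun n => integrable_char (hY n) v
  have key : ∀ n, ∫ ω, Complex.exp ((u * X n ω + v * Y n ω) * Complex.I) ∂μ
      = ∫ ω, Complex.exp (u * X n ω * Complex.I) *
          (μ[(fun ω' => Complex.exp (v * Y n ω' * Complex.I)) |
            MeasurableSpace.comap (X n) (borel ℝ)]) ω ∂μ := by
    intro n
    simp_rw [add_mul, Complex.exp_add]
    exact integral_mul_condexp (hm n) (hXm n) (hfb n) (hgint n)
  have hc2norm : ‖c2‖ ≤ 1 := by
    calc ‖c2‖ ≤ ∫ y, ‖Complex.exp (v * y * Complex.I)‖ ∂PY :=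
          norm_integral_le_integral_norm _
      _ = 1 := by simp only [norm_char]; simp
  have decomp : ∀ n, ∫ ω, Complex.exp (u * X n ω * Complex.I) *
          (μ[(fun ω' => Complex.exp (v * Y n ω' * Complex.I)) |
            MeasurableSpace.comap (X n) (borel ℝ)]) ω ∂μ
      = (∫ ω, Complex.exp (u * X n ω * Complex.I) *
          ((μ[(fun ω' => Complex.exp (v * Y n ω' * Complex.I)) |
            MeasurableSpace.comap (X n) (borel ℝ)]) ω - c2) ∂μ)
        + (∫ ω, Complex.exp (u * X n ω * Complex.I) ∂μ) * c2 := by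
    intro n
    have hfaem : AEStronglyMeasurable (fun ω => Complex.exp (u * X n ω * Complex.I)) μ :=
      ((hXm n).mono (hm n)).aestronglyMeasurable
    have i1 : Integrable (fun ω => Complex.exp (u * X n ω * Complex.I) *
        ((μ[(fun ω' => Complex.exp (v * Y n ω' * Complex.I)) |
          MeasurableSpace.comap (X n) (borel ℝ)]) ω - c2)) μ :=
      (integrable_condExp.sub (integrable_const c2)).bdd_mul hfaem
        (Eventually.of_forall (hfb n))
    have i2 : Integrable (fun ω => Complex.exp (u * X n ω * Complex.I) * c2) μ :=
      (integrable_const c2).bdd_mul hfaem (Eventually.of_forall (hfb n))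
    rw [← integral_mul_const, ← integral_add i1 i2]
    exact integral_congr_ae (Eventually.of_forall fun ω => by ring)
  have h2 : Tendsto (fun n => (∫ ω, Complex.exp (u * X n ω * Complex.I) ∂μ) * c2) atTop
      (𝓝 (c1 * c2)) := (hXconv u).mul_const c2
  have h1 : Tendsto (fun n => ∫ ω, Complex.exp (u * X n ω * Complex.I) *
      ((μ[(fun ω' => Complex.exp (v * Y n ω' * Complex.I)) |
        MeasurableSpace.comap (X n) (borel ℝ)]) ω - c2) ∂μ) atTop (𝓝 0) := by
    have hzero : Tendsto (fun n => ∫ ω,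
        ‖(μ[(fun ω' => Complex.exp (v * Y n ω' * Complex.I)) |
          MeasurableSpace.comap (X n) (borel ℝ)]) ω - c2‖ ∂μ) atTop (𝓝 0) := by
      have := tendsto_integral_of_dominated_convergence (μ := μ)
        (F := fun n ω => ‖(μ[(fun ω' => Complex.exp (v * Y n ω' * Complex.I)) |
          MeasurableSpace.comap (X n) (borel ℝ)]) ω - c2‖)
        (f := fun _ => (0 : ℝ)) (fun _ => (3 : ℝ))
        (fun n => ((stronglyMeasurable_condExp.mono (hm n)).aestronglyMeasurable.sub
          aestronglyMeasurable_const).norm)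
        (integrable_const _)
        (fun n => by
          filter_upwards [ae_norm_condexp_le (hm n) (hgint n)
            (fun ω => le_of_eq (norm_char v (Y n ω)))] with ω hω
          have : ‖(μ[(fun ω' => Complex.exp (v * Y n ω' * Complex.I)) |
              MeasurableSpace.comap (X n) (borel ℝ)]) ω - c2‖
              ≤ ‖(μ[(fun ω' => Complex.exp (v * Y n ω' * Complex.I)) |
              MeasurableSpace.comap (X n) (borel ℝ)]) ω‖ + ‖c2‖ := norm_sub_le _ _
          rw [Real.norm_eq_abs, abs_norm]
          linarith)
        (by
          filter_upwards [hYcond v] with ω hω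
          exact tendsto_iff_norm_sub_tendsto_zero.mp hω)
      simpa using this
    refine squeeze_zero_norm (fun n => ?_) hzero
    calc ‖∫ ω, Complex.exp (u * X n ω * Complex.I) *
          ((μ[(fun ω' => Complex.exp (v * Y n ω' * Complex.I)) |
            MeasurableSpace.comap (X n) (borel ℝ)]) ω - c2) ∂μ‖
        ≤ ∫ ω, ‖Complex.exp (u * X n ω * Complex.I) *
          ((μ[(fun ω' => Complex.exp (v * Y n ω' * Complex.I)) |
            MeasurableSpace.comap (X n) (borel ℝ)]) ω - c2)‖ ∂μ :=
          norm_integral_le_integral_norm _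
      _ = ∫ ω, ‖(μ[(fun ω' => Complex.exp (v * Y n ω' * Complex.I)) |
            MeasurableSpace.comap (X n) (borel ℝ)]) ω - c2‖ ∂μ := by
          refine integral_congr_ae (Eventually.of_forall fun ω => ?_)
          simp only [norm_mul, norm_char, one_mul]
  have hfinal := h1.add h2
  rw [zero_add] at hfinal
  exact hfinal.congr fun n => ((key n).trans (decomp n)).symm
end
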